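/- Let V₁ ⊆ ℂ be an open set, let φ, α : V₁ → ℝ be measurable functions with α(z) < φ(z) for all z ∈ V₁, let n ≥ 2 be an integer, and let U₁ = {(z,w) ∈ ℂ² : z ∈ V₁, e^{−φ(z)} < |w| < e^{−α(z)}}. Define the weight e^{−λ_n(z)} = (π/(n−1)) (e^{(2n−2)φ(z)} − e^{(2n−2)α(z)}), so that e^{−λ_n(z)} = ∫_{e^{−φ(z)}<|w|<e^{−α(z)}} |w|^{−2n} dV(w). Suppose g : V₁ → ℂ is measurable with ∫_{V₁} |g(z)|² e^{−λ_n(z)} dV(z) < ∞ and ∫_{V₁} g(z) \overline{h(z)} e^{−λ_n(z)} dV(z) = 0 for every holomorphic function h on V₁ with ∫_{V₁} |h|² e^{−λ_n} dV < ∞. Then the function G(z,w) = g(z) w^{−n} belongs to L²(U₁) and ⟨G, h(z)wᵐ⟩_{L²(U₁)} = 0 for every integer m and every holomorphic function h on V₁ such that h(z)wᵐ ∈ L²(U₁). -/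

import Mathlib

open MeasureTheory

/-- The Hartogs-type set `{(z,w) : z ∈ V, σ(z) < |w| < τ(z)}` in `ℂ²`. -/
def hartogsSet (V : Set ℂ) (σ τ : ℂ → ℝ) : Set (ℂ × ℂ) :=
  {p : ℂ × ℂ | p.1 ∈ V ∧ σ p.1 < ‖p.2‖ ∧ ‖p.2‖ < τ p.1}

/-- The weight `e^{-λ_n(z)} = (π/(n-1)) (e^{(2n-2)φ(z)} - e^{(2n-2)α(z)})`, i.e. the value
`∫_{e^{-φ(z)}<|w|<e^{-α(z)}} |w|^{-2n} dV(w)`. -/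
noncomputable def fiberWeight (n : ℤ) (φ α : ℂ → ℝ) (z : ℂ) : ℝ :=
  Real.pi / ((n : ℝ) - 1) *
    (Real.exp ((2 * (n : ℝ) - 2) * φ z) - Real.exp ((2 * (n : ℝ) - 2) * α z))

namespace OrthAux

open Set Complex Real

noncomputable section

/-- open annulus -/
def ann (a b : ℝ) : Set ℂ := {w : ℂ | a < ‖w‖ ∧ ‖w‖ < b}

lemma measurableSet_ann (a b : ℝ) : MeasurableSet (ann a b) := by
  have h : Measurable fun w : ℂ => ‖w‖ := continuous_norm.measurable
  exact (measurableSet_lt measurable_const h).inter (measurableSet_lt h measurable_const)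

lemma point_eval (r θ : ℝ) (hr : 0 < r) (p q : ℤ) :
    r • ((Complex.polarCoord.symm (r, θ)) ^ p *
        (starRingEnd ℂ) ((Complex.polarCoord.symm (r, θ)) ^ q)) =
      (r : ℂ) ^ (p + q + 1) * Complex.exp (((p - q : ℤ) : ℂ) * θ * Complex.I) := by
  have hsym : Complex.polarCoord.symm (r, θ) = (r : ℂ) * Complex.exp (θ * Complex.I) := by
    rw [Complex.polarCoord_symm_apply, Complex.exp_mul_I]
    push_cast
    ring
  have hr0 : (r : ℂ) ≠ 0 := by exact_mod_cast hr.ne'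
  have hconj : (starRingEnd ℂ) (Complex.exp (θ * Complex.I)) =
      Complex.exp (-(θ * Complex.I)) := by
    rw [← Complex.exp_conj, map_mul, Complex.conj_ofReal, Complex.conj_I, mul_neg]
  rw [hsym, mul_zpow, mul_zpow, map_mul, map_zpow₀, map_zpow₀, Complex.conj_ofReal,
    hconj, ← Complex.exp_int_mul, ← Complex.exp_int_mul]
  rw [Complex.real_smul]
  rw [show ((r:ℂ)^p * Complex.exp (p * (θ * Complex.I)) *
      ((r:ℂ)^q * Complex.exp (q * (-(θ * Complex.I))))) =
      ((r:ℂ)^p * (r:ℂ)^q) * (Complex.exp (p * (θ * Complex.I)) *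
        Complex.exp (q * (-(θ * Complex.I)))) by ring]
  rw [← zpow_add₀ hr0, ← Complex.exp_add]
  rw [show (r:ℂ) * ((r:ℂ)^(p+q) * Complex.exp ((p:ℂ) * (θ * Complex.I) +
      (q:ℂ) * -(θ * Complex.I))) = (r:ℂ)^(p+q) * (r:ℂ) * Complex.exp ((p:ℂ) * (θ * Complex.I) +
      (q:ℂ) * -(θ * Complex.I)) by ring]
  rw [← zpow_add_one₀ hr0]
  congr 1
  push_cast
  ring_nf

lemma theta_int (k : ℤ) :
    (∫ θ in Set.Ioo (-π) π, Complex.exp ((k : ℂ) * θ * Complex.I)) =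
      if k = 0 then ((2 * π : ℝ) : ℂ) else 0 := by
  by_cases hk : k = 0
  · subst hk
    simp only [Int.cast_zero, zero_mul, Complex.exp_zero, if_true]
    rw [setIntegral_const]
    rw [Real.volume_real_Ioo_of_le (by linarith [Real.pi_pos] : -π ≤ π)]
    push_cast
    rw [Complex.real_smul]
    push_cast
    ring
  · rw [if_neg hk]
    have h1 : (∫ θ in Set.Ioo (-π) π, Complex.exp ((k : ℂ) * θ * Complex.I)) =
        ∫ θ in (-π)..π, Complex.exp (((k : ℂ) * Complex.I) * θ) := by
      rw [intervalIntegral.integral_of_le (by linarith [Real.pi_pos] : -π ≤ π)]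
      rw [← integral_Ioc_eq_integral_Ioo]
      congr 1
      ext θ
      ring_nf
    rw [h1, integral_exp_mul_complex (by simp [hk] : ((k:ℂ) * Complex.I) ≠ 0)]
    have e1 : Complex.exp ((k:ℂ) * Complex.I * π) = (-1 : ℂ) ^ k := by
      rw [show (k:ℂ) * Complex.I * π = (k:ℂ) * (π * Complex.I) by ring,
        Complex.exp_int_mul, Complex.exp_pi_mul_I]
    have e2 : Complex.exp ((k:ℂ) * Complex.I * ((-π : ℝ) : ℂ)) = ((-1 : ℂ) ^ k)⁻¹ := by
      rw [show (k:ℂ) * Complex.I * ((-π : ℝ) : ℂ) = (-k:ℂ) * (π * Complex.I) by push_cast; ring]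
      rw [show (-(k:ℂ)) = ((-k : ℤ) : ℂ) by push_cast; ring, Complex.exp_int_mul,
        Complex.exp_pi_mul_I, zpow_neg]
    rw [e1, e2]
    have : ((-1 : ℂ) ^ k)⁻¹ = (-1 : ℂ) ^ k := by
      rcases Int.even_or_odd k with h | h
      · rw [h.neg_one_zpow]; norm_num
      · rw [h.neg_one_zpow]; norm_num
    rw [this, sub_self, zero_div]

lemma fiber_reduce (a b : ℝ) (ha : 0 < a) (p q : ℤ) :
    (∫ w in ann a b, w ^ p * (starRingEnd ℂ) (w ^ q)) =
      (∫ r in Set.Ioo a b, ((r : ℂ) ^ (p + q + 1))) *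
        ∫ θ in Set.Ioo (-π) π, Complex.exp (((p - q : ℤ) : ℂ) * θ * Complex.I) := by
  set f : ℂ → ℂ := (ann a b).indicator (fun w => w ^ p * (starRingEnd ℂ) (w ^ q)) with hf
  have h1 : (∫ w in ann a b, w ^ p * (starRingEnd ℂ) (w ^ q)) = ∫ w, f w :=
    (integral_indicator (measurableSet_ann a b)).symm
  rw [h1, ← Complex.integral_comp_polarCoord_symm f]
  have h2 : ∀ x ∈ polarCoord.target,
      x.1 • f (Complex.polarCoord.symm x) =
      (Set.Ioo a b ×ˢ Set.Ioo (-π) π).indicator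
        (fun x : ℝ × ℝ => (x.1 : ℂ) ^ (p + q + 1) *
          Complex.exp (((p - q : ℤ) : ℂ) * x.2 * Complex.I)) x := by
    rintro ⟨r, θ⟩ hx
    rw [polarCoord_target] at hx
    obtain ⟨hr, hθ⟩ := hx
    simp only [Set.mem_Ioi] at hr
    have habs : ‖Complex.polarCoord.symm (r, θ)‖ = r := by
      rw [Complex.norm_polarCoord_symm]; exact abs_of_pos hr
    by_cases hmem : r ∈ Set.Ioo a b
    · have hin : Complex.polarCoord.symm (r, θ) ∈ ann a b := by
        simp only [ann, Set.mem_setOf_eq, habs]; exact ⟨hmem.1, hmem.2⟩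
      rw [hf]
      rw [Set.indicator_of_mem hin, Set.indicator_of_mem (by exact ⟨hmem, hθ⟩)]
      exact point_eval r θ hr p q
    · have hnin : Complex.polarCoord.symm (r, θ) ∉ ann a b := by
        simp only [ann, Set.mem_setOf_eq, habs]
        intro hc; exact hmem ⟨hc.1, hc.2⟩
      rw [hf, Set.indicator_of_notMem hnin,
        Set.indicator_of_notMem (by intro hc; exact hmem hc.1), smul_zero]
  rw [setIntegral_congr_fun polarCoord.open_target.measurableSet h2]
  rw [setIntegral_indicator ((measurableSet_Ioo).prod measurableSet_Ioo)]
  have h3 : polarCoord.target ∩ Set.Ioo a b ×ˢ Set.Ioo (-π) π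
      = Set.Ioo a b ×ˢ Set.Ioo (-π) π := by
    rw [polarCoord_target, Set.inter_eq_right]
    exact Set.prod_mono (fun x hx => lt_trans ha hx.1) (fun x hx => hx)
  rw [h3]
  rw [Measure.volume_eq_prod, ← Measure.prod_restrict]
  exact integral_prod_mul (μ := volume.restrict (Set.Ioo a b))
    (ν := volume.restrict (Set.Ioo (-π) π))
    (fun r : ℝ => (r : ℂ) ^ (p + q + 1))
    (fun θ : ℝ => Complex.exp (((p - q : ℤ) : ℂ) * θ * Complex.I))

lemma r_int (a b : ℝ) (ha : 0 < a) (hab : a < b) (n : ℤ) (hn : 2 ≤ n) :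
    (∫ r in Set.Ioo a b, ((r : ℂ) ^ (-n + -n + 1))) =
      (((b ^ (2 - 2 * n) - a ^ (2 - 2 * n)) / ((2 : ℝ) - 2 * (n : ℝ)) : ℝ) : ℂ) := by
  have h0 : ∀ r : ℝ, (r : ℂ) ^ (-n + -n + 1) = ((r ^ (-n + -n + 1) : ℝ) : ℂ) := by
    intro r; rw [Complex.ofReal_zpow]
  simp only [h0]
  rw [show (∫ r in Set.Ioo a b, ((r ^ (-n + -n + 1) : ℝ) : ℂ)) =
      (((∫ r in Set.Ioo a b, r ^ (-n + -n + 1)) : ℝ) : ℂ) from integral_ofReal]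
  congr 1
  rw [← integral_Ioc_eq_integral_Ioo, ← intervalIntegral.integral_of_le hab.le]
  rw [integral_zpow (Or.inr ⟨by omega, by
    rw [Set.uIcc_of_le hab.le]
    intro hc
    exact absurd hc.1 (by linarith)⟩)]
  have : -n + -n + 1 + 1 = 2 - 2 * n := by ring
  rw [this]
  congr 1
  push_cast
  ring

lemma fiber_ne (a b : ℝ) (ha : 0 < a) (p q : ℤ) (hpq : p ≠ q) :
    (∫ w in ann a b, w ^ p * (starRingEnd ℂ) (w ^ q)) = 0 := by
  rw [fiber_reduce a b ha p q, theta_int, if_neg (sub_ne_zero.mpr hpq), mul_zero]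

lemma fiber_diag (a b : ℝ) (ha : 0 < a) (hab : a < b) (n : ℤ) (hn : 2 ≤ n) :
    (∫ w in ann a b, w ^ (-n) * (starRingEnd ℂ) (w ^ (-n))) =
      ((π / ((n : ℝ) - 1) * (a ^ (2 - 2 * n) - b ^ (2 - 2 * n)) : ℝ) : ℂ) := by
  rw [fiber_reduce a b ha (-n) (-n), theta_int, if_pos (sub_self (-n)),
    r_int a b ha hab n hn, ← Complex.ofReal_mul, Complex.ofReal_inj]
  have h1 : (2 : ℝ) - 2 * (n : ℝ) ≠ 0 := by
    have : (2 : ℝ) ≤ (n : ℝ) := by exact_mod_cast hn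
    intro hc; nlinarith
  have h2 : (n : ℝ) - 1 ≠ 0 := by
    have : (2 : ℝ) ≤ (n : ℝ) := by exact_mod_cast hn
    intro hc; nlinarith
  have h3 : (1 : ℝ) - (n : ℝ) ≠ 0 := by
    have : (2 : ℝ) ≤ (n : ℝ) := by exact_mod_cast hn
    intro hc; nlinarith
  field_simp
  ring

lemma fiber_integrableOn (a b : ℝ) (ha : 0 < a) (p q : ℤ) :
    IntegrableOn (fun w : ℂ => w ^ p * (starRingEnd ℂ) (w ^ q)) (ann a b) := by
  have hK : IsCompact {w : ℂ | a ≤ ‖w‖ ∧ ‖w‖ ≤ b} := by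
    have hcl : IsClosed {w : ℂ | a ≤ ‖w‖ ∧ ‖w‖ ≤ b} :=
      (isClosed_le continuous_const continuous_norm).inter
        (isClosed_le continuous_norm continuous_const)
    have hsub : {w : ℂ | a ≤ ‖w‖ ∧ ‖w‖ ≤ b} ⊆ Metric.closedBall 0 b := by
      intro w hw
      simpa [Metric.mem_closedBall, Complex.dist_eq] using hw.2
    exact (isCompact_closedBall 0 b).of_isClosed_subset hcl hsub
  have hcont : ContinuousOn (fun w : ℂ => w ^ p * (starRingEnd ℂ) (w ^ q))
      {w : ℂ | a ≤ ‖w‖ ∧ ‖w‖ ≤ b} := by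
    intro w hw
    have hw0 : w ≠ 0 := by
      intro h; rw [h] at hw; simp at hw; linarith [hw.1]
    apply ContinuousAt.continuousWithinAt
    exact ((continuousAt_zpow₀ w p (Or.inl hw0)).mul
      ((Complex.continuous_conj.continuousAt).comp (continuousAt_zpow₀ w q (Or.inl hw0))))
  exact (hcont.integrableOn_compact hK).mono_set
    (fun w hw => ⟨hw.1.le, hw.2.le⟩)

lemma fiber_real_integrable (a b : ℝ) (ha : 0 < a) (n : ℤ) :
    IntegrableOn (fun w : ℂ => ‖w ^ (-n)‖ ^ 2) (ann a b) := by
  have h := (fiber_integrableOn a b ha (-n) (-n)).norm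
  refine h.congr (Filter.Eventually.of_forall fun w => ?_)
  show ‖w ^ (-n) * (starRingEnd ℂ) (w ^ (-n))‖ = ‖w ^ (-n)‖ ^ 2
  rw [norm_mul, RCLike.norm_conj, sq]

lemma fiber_real (a b : ℝ) (ha : 0 < a) (hab : a < b) (n : ℤ) (hn : 2 ≤ n) :
    (∫ w in ann a b, ‖w ^ (-n)‖ ^ 2) =
      π / ((n : ℝ) - 1) * (a ^ (2 - 2 * n) - b ^ (2 - 2 * n)) := by
  have hpt : ∀ w : ℂ, w ^ (-n) * (starRingEnd ℂ) (w ^ (-n)) = ((‖w ^ (-n)‖ ^ 2 : ℝ) : ℂ) := by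
    intro w
    rw [Complex.mul_conj, Complex.normSq_eq_norm_sq]
  have := fiber_diag a b ha hab n hn
  simp only [hpt] at this
  rw [show (∫ w in ann a b, ((‖w ^ (-n)‖ ^ 2 : ℝ) : ℂ)) =
      (((∫ w in ann a b, ‖w ^ (-n)‖ ^ 2) : ℝ) : ℂ) from integral_ofReal] at this
  exact_mod_cast this

lemma exp_zpow (x : ℝ) (k : ℤ) : Real.exp x ^ k = Real.exp ((k : ℝ) * x) := by
  rw [← Real.rpow_intCast (Real.exp x) k, ← Real.exp_mul, mul_comm]

lemma fw_eq (n : ℤ) (φ α : ℂ → ℝ) (z : ℂ) :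
    π / ((n : ℝ) - 1) * (Real.exp (-φ z) ^ (2 - 2 * n) - Real.exp (-α z) ^ (2 - 2 * n)) =
      fiberWeight n φ α z := by
  rw [exp_zpow, exp_zpow, fiberWeight,
    show ((2 - 2 * n : ℤ) : ℝ) * (-φ z) = (2 * (n : ℝ) - 2) * φ z by push_cast; ring,
    show ((2 - 2 * n : ℤ) : ℝ) * (-α z) = (2 * (n : ℝ) - 2) * α z by push_cast; ring]

lemma measurableSet_hartogs (V₁ : Set ℂ) (hV₁ : MeasurableSet V₁) {φ α : ℂ → ℝ}
    (hφ : Measurable φ) (hα : Measurable α) :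
    MeasurableSet (hartogsSet V₁ (fun z => Real.exp (-φ z)) (fun z => Real.exp (-α z))) := by
  have h1 : Measurable fun p : ℂ × ℂ => ‖p.2‖ :=
    continuous_norm.measurable.comp measurable_snd
  have h2 : Measurable fun p : ℂ × ℂ => Real.exp (-φ p.1) :=
    Real.continuous_exp.measurable.comp (hφ.comp measurable_fst).neg
  have h3 : Measurable fun p : ℂ × ℂ => Real.exp (-α p.1) :=
    Real.continuous_exp.measurable.comp (hα.comp measurable_fst).neg
  have : hartogsSet V₁ (fun z => Real.exp (-φ z)) (fun z => Real.exp (-α z)) =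
      (Prod.fst ⁻¹' V₁) ∩ ({p : ℂ × ℂ | Real.exp (-φ p.1) < ‖p.2‖} ∩
        {p : ℂ × ℂ | ‖p.2‖ < Real.exp (-α p.1)}) := by
    ext p; simp [hartogsSet, and_assoc]
  rw [this]
  exact (measurable_fst hV₁).inter ((measurableSet_lt h2 h1).inter (measurableSet_lt h1 h3))


lemma fubini_hartogs (V₁ : Set ℂ) (hV₁ : MeasurableSet V₁) {φ α : ℂ → ℝ}
    (hφ : Measurable φ) (hα : Measurable α) (F : ℂ × ℂ → ℂ)
    (hF : Integrable F (volume.restrict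
      (hartogsSet V₁ (fun z => Real.exp (-φ z)) (fun z => Real.exp (-α z))))) :
    (∫ p in hartogsSet V₁ (fun z => Real.exp (-φ z)) (fun z => Real.exp (-α z)), F p) =
      ∫ z in V₁, ∫ w in ann (Real.exp (-φ z)) (Real.exp (-α z)), F (z, w) := by
  set U := hartogsSet V₁ (fun z => Real.exp (-φ z)) (fun z => Real.exp (-α z)) with hU
  have hUm : MeasurableSet U := measurableSet_hartogs V₁ hV₁ hφ hα
  rw [← integral_indicator hUm]
  rw [Measure.volume_eq_prod]
  rw [integral_prod _ (by
    rw [integrable_indicator_iff hUm]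
    rw [IntegrableOn, ← Measure.volume_eq_prod]
    exact hF)]
  rw [← integral_indicator hV₁]
  congr 1
  funext z
  by_cases hz : z ∈ V₁
  · rw [Set.indicator_of_mem hz]
    rw [← integral_indicator (measurableSet_ann (Real.exp (-φ z)) (Real.exp (-α z)))]
    congr 1
    funext w
    by_cases hw : w ∈ ann (Real.exp (-φ z)) (Real.exp (-α z))
    · rw [Set.indicator_of_mem hw, Set.indicator_of_mem (show (z, w) ∈ U from ⟨hz, hw.1, hw.2⟩)]
    · rw [Set.indicator_of_notMem hw,
        Set.indicator_of_notMem (show (z, w) ∉ U from fun hc => hw ⟨hc.2.1, hc.2.2⟩)]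
  · rw [Set.indicator_of_notMem hz]
    have h0 : ∀ w : ℂ, Set.indicator U F (z, w) = 0 := fun w =>
      Set.indicator_of_notMem (fun hc => hz hc.1) _
    simp only [h0, integral_zero]

lemma sq_int_iff (V₁ : Set ℂ) (hV₁ : MeasurableSet V₁) {φ α : ℂ → ℝ}
    (hφ : Measurable φ) (hα : Measurable α) (hαφ : ∀ z ∈ V₁, α z < φ z)
    (n : ℤ) (hn : 2 ≤ n) (c : ℂ → ℂ)
    (hc : AEStronglyMeasurable (fun p : ℂ × ℂ => c p.1 * p.2 ^ (-n))
      (volume.restrict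
        (hartogsSet V₁ (fun z => Real.exp (-φ z)) (fun z => Real.exp (-α z))))) :
    Integrable (fun p : ℂ × ℂ => ‖c p.1 * p.2 ^ (-n)‖ ^ 2)
      (volume.restrict
        (hartogsSet V₁ (fun z => Real.exp (-φ z)) (fun z => Real.exp (-α z)))) ↔
      Integrable (fun z => ‖c z‖ ^ 2 * fiberWeight n φ α z)
        (volume.restrict V₁) := by
  set U := hartogsSet V₁ (fun z => Real.exp (-φ z)) (fun z => Real.exp (-α z)) with hUdef
  have hUm : MeasurableSet U := measurableSet_hartogs V₁ hV₁ hφ hα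
  set N : ℂ × ℂ → ℝ := U.indicator (fun p => ‖c p.1 * p.2 ^ (-n)‖ ^ 2) with hNdef
  have hNm : AEStronglyMeasurable N ((volume : Measure ℂ).prod volume) := by
    rw [← Measure.volume_eq_prod]
    exact (aestronglyMeasurable_indicator_iff hUm).mpr
      ((continuous_pow 2).comp_aestronglyMeasurable hc.norm)
  have hsl : ∀ z ∈ V₁, (fun w => N (z, w)) =
      (ann (Real.exp (-φ z)) (Real.exp (-α z))).indicator
        (fun w => ‖c z‖ ^ 2 * ‖w ^ (-n)‖ ^ 2) := by
    intro z hz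
    funext w
    by_cases hw : w ∈ ann (Real.exp (-φ z)) (Real.exp (-α z))
    · rw [hNdef]
      rw [Set.indicator_of_mem (show (z, w) ∈ U from ⟨hz, hw.1, hw.2⟩),
        Set.indicator_of_mem hw, norm_mul, mul_pow]
    · rw [hNdef]
      rw [Set.indicator_of_notMem (show (z, w) ∉ U from fun hc' => hw ⟨hc'.2.1, hc'.2.2⟩),
        Set.indicator_of_notMem hw]
  have hfib : ∀ z : ℂ, Integrable (fun w => N (z, w)) volume := by
    intro z
    by_cases hz : z ∈ V₁
    · rw [hsl z hz, integrable_indicator_iff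
        (measurableSet_ann (Real.exp (-φ z)) (Real.exp (-α z)))]
      exact (fiber_real_integrable _ _ (Real.exp_pos _) n).const_mul _
    · have h0 : (fun w => N (z, w)) = fun _ => (0 : ℝ) := by
        funext w
        exact Set.indicator_of_notMem (fun hc' => hz hc'.1) _
      rw [h0]
      exact integrable_zero _ _ _
  have key : Integrable (fun p : ℂ × ℂ => ‖c p.1 * p.2 ^ (-n)‖ ^ 2) (volume.restrict U) ↔
      Integrable N ((volume : Measure ℂ).prod volume) := by
    rw [← Measure.volume_eq_prod, integrable_indicator_iff hUm]
    exact Iff.rfl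
  rw [key, integrable_prod_iff hNm,
    and_iff_right (Filter.Eventually.of_forall hfib)]
  have h2 : (fun x => ∫ y, ‖N (x, y)‖) =
      V₁.indicator (fun z => ‖c z‖ ^ 2 * fiberWeight n φ α z) := by
    funext z
    have hnn : ∀ y, ‖N (z, y)‖ = N (z, y) := fun y =>
      Real.norm_of_nonneg (Set.indicator_nonneg (fun p _ => by positivity) _)
    simp only [hnn]
    by_cases hz : z ∈ V₁
    · rw [Set.indicator_of_mem hz]
      have : (∫ y, N (z, y)) = ∫ w in ann (Real.exp (-φ z)) (Real.exp (-α z)),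
          ‖c z‖ ^ 2 * ‖w ^ (-n)‖ ^ 2 := by
        rw [← integral_indicator (measurableSet_ann _ _)]
        exact integral_congr_ae (Filter.Eventually.of_forall fun y =>
          congrFun (hsl z hz) y)
      rw [this, integral_const_mul]
      rw [fiber_real _ _ (Real.exp_pos _)
        (Real.exp_lt_exp.mpr (neg_lt_neg (hαφ z hz))) n hn, fw_eq n φ α z]
    · rw [Set.indicator_of_notMem hz]
      have h0 : ∀ y : ℂ, N (z, y) = 0 := fun y =>
        Set.indicator_of_notMem (fun hc' => hz hc'.1) _
      simp only [h0, integral_zero]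
  rw [h2, integrable_indicator_iff hV₁]
  exact Iff.rfl


end

end OrthAux

open OrthAux in
/-- Suppose `g` is measurable on `V₁` with finite weighted `L²` norm
`∫_{V₁} |g|² e^{-λ_n} dV < ∞` and is orthogonal in `L²(V₁, λ_n)` to every holomorphic
function with finite weighted norm. Then `G(z,w) = g(z)w^{-n}` belongs to
`L²(U₁)` and is orthogonal there to `h(z)wᵐ` for every integer `m` and holomorphic `h` on
`V₁` with `h(z)wᵐ ∈ L²(U₁)`. -/
theorem orthogonal_monomial_extension (V₁ : Set ℂ) (hV₁ : IsOpen V₁) (φ α : ℂ → ℝ)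
    (hφ : Measurable φ) (hα : Measurable α) (hαφ : ∀ z ∈ V₁, α z < φ z)
    (n : ℤ) (hn : 2 ≤ n) (g : ℂ → ℂ) (hg : Measurable g)
    (hgL2 : Integrable (fun z => ‖g z‖ ^ 2 * fiberWeight n φ α z)
      (volume.restrict V₁))
    (horth : ∀ h : ℂ → ℂ, DifferentiableOn ℂ h V₁ →
      Integrable (fun z => ‖h z‖ ^ 2 * fiberWeight n φ α z)
        (volume.restrict V₁) →
      ∫ z in V₁, g z * (starRingEnd ℂ) (h z) * ((fiberWeight n φ α z : ℝ) : ℂ) = 0) :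
    MemLp (fun p : ℂ × ℂ => g p.1 * p.2 ^ (-n)) 2
      (volume.restrict
        (hartogsSet V₁ (fun z => Real.exp (-φ z)) (fun z => Real.exp (-α z)))) ∧
    ∀ (m : ℤ) (h : ℂ → ℂ), DifferentiableOn ℂ h V₁ →
      MemLp (fun p : ℂ × ℂ => h p.1 * p.2 ^ m) 2
        (volume.restrict
          (hartogsSet V₁ (fun z => Real.exp (-φ z)) (fun z => Real.exp (-α z)))) →
      ∫ p in hartogsSet V₁ (fun z => Real.exp (-φ z)) (fun z => Real.exp (-α z)),
        g p.1 * p.2 ^ (-n) * (starRingEnd ℂ) (h p.1 * p.2 ^ m) = 0 := by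
  have hV₁m : MeasurableSet V₁ := hV₁.measurableSet
  have hUm : MeasurableSet
      (hartogsSet V₁ (fun z => Real.exp (-φ z)) (fun z => Real.exp (-α z))) :=
    measurableSet_hartogs V₁ hV₁m hφ hα
  have hGm : Measurable (fun p : ℂ × ℂ => g p.1 * p.2 ^ (-n)) :=
    (hg.comp measurable_fst).mul (measurable_snd.pow_const (-n))
  have hGaesm : AEStronglyMeasurable (fun p : ℂ × ℂ => g p.1 * p.2 ^ (-n))
      (volume.restrict
        (hartogsSet V₁ (fun z => Real.exp (-φ z)) (fun z => Real.exp (-α z)))) :=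
    hGm.aestronglyMeasurable
  have hGmem : MemLp (fun p : ℂ × ℂ => g p.1 * p.2 ^ (-n)) 2
      (volume.restrict
        (hartogsSet V₁ (fun z => Real.exp (-φ z)) (fun z => Real.exp (-α z)))) := by
    rw [memLp_two_iff_integrable_sq_norm hGaesm]
    exact (sq_int_iff V₁ hV₁m hφ hα hαφ n hn g hGaesm).mpr hgL2
  refine ⟨hGmem, ?_⟩
  intro m h hdiff hmem
  have hHaesm := hmem.aestronglyMeasurable
  have hconj : MemLp (fun p : ℂ × ℂ => (starRingEnd ℂ) (h p.1 * p.2 ^ m)) 2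
      (volume.restrict
        (hartogsSet V₁ (fun z => Real.exp (-φ z)) (fun z => Real.exp (-α z)))) := by
    refine MemLp.of_le hmem (Complex.continuous_conj.comp_aestronglyMeasurable hHaesm) ?_
    exact Filter.Eventually.of_forall fun p => le_of_eq (RCLike.norm_conj _)
  have hprod : Integrable
      (fun p : ℂ × ℂ => g p.1 * p.2 ^ (-n) * (starRingEnd ℂ) (h p.1 * p.2 ^ m))
      (volume.restrict
        (hartogsSet V₁ (fun z => Real.exp (-φ z)) (fun z => Real.exp (-α z)))) := by
    rw [← memLp_one_iff_integrable]
    have h121 : (1 : ENNReal) / 1 = 1 / 2 + 1 / 2 := by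
      rw [ENNReal.add_halves]; norm_num
    simpa [smul_eq_mul, Pi.mul_def] using MemLp.smul (r := 1) (hf := hconj) (hφ := hGmem)
  by_cases hm : m = -n
  · subst hm
    have hHL2 : Integrable (fun z => ‖h z‖ ^ 2 * fiberWeight n φ α z)
        (volume.restrict V₁) :=
      (sq_int_iff V₁ hV₁m hφ hα hαφ n hn h hHaesm).mp
        ((memLp_two_iff_integrable_sq_norm hHaesm).mp hmem)
    rw [fubini_hartogs V₁ hV₁m hφ hα _ hprod]
    have hinner : ∀ z ∈ V₁,
        (∫ w in ann (Real.exp (-φ z)) (Real.exp (-α z)),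
          g z * w ^ (-n) * (starRingEnd ℂ) (h z * w ^ (-n))) =
        g z * (starRingEnd ℂ) (h z) * ((fiberWeight n φ α z : ℝ) : ℂ) := by
      intro z hz
      have hre : ∀ w : ℂ, g z * w ^ (-n) * (starRingEnd ℂ) (h z * w ^ (-n)) =
          (g z * (starRingEnd ℂ) (h z)) * (w ^ (-n) * (starRingEnd ℂ) (w ^ (-n))) := by
        intro w; rw [map_mul]; ring
      simp only [hre]
      rw [integral_const_mul, fiber_diag _ _ (Real.exp_pos _)
        (Real.exp_lt_exp.mpr (neg_lt_neg (hαφ z hz))) n hn, fw_eq n φ α z]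
    rw [setIntegral_congr_fun hV₁m hinner]
    exact horth h hdiff hHL2
  · rw [fubini_hartogs V₁ hV₁m hφ hα _ hprod]
    have hinner : ∀ z ∈ V₁,
        (∫ w in ann (Real.exp (-φ z)) (Real.exp (-α z)),
          g z * w ^ (-n) * (starRingEnd ℂ) (h z * w ^ m)) = (0 : ℂ) := by
      intro z hz
      have hre : ∀ w : ℂ, g z * w ^ (-n) * (starRingEnd ℂ) (h z * w ^ m) =
          (g z * (starRingEnd ℂ) (h z)) * (w ^ (-n) * (starRingEnd ℂ) (w ^ m)) := by
        intro w; rw [map_mul]; ring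
      simp only [hre]
      rw [integral_const_mul, fiber_ne _ _ (Real.exp_pos _) (-n) m
        (fun hc => hm hc.symm), mul_zero]
    rw [setIntegral_congr_fun hV₁m hinner]
    simp
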